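/- The number of dominant regions of the m-Shi arrangement of type A_{n−1} that have H_{θ,m} as a separating wall equals m^{n−2}. -/

import Mathlib

open Finset

namespace Shi

/-- Inner product of `x` with the positive root `α_{ij} = e_i - e_{j+1}` (0-indexed
`i ≤ j ≤ n-2`). -/
def inn (x : ℕ → ℝ) (i j : ℕ) : ℝ := x i - x (j + 1)

def SumZero (n : ℕ) (x : ℕ → ℝ) : Prop := ∑ i ∈ Finset.range n, x i = 0

/-- `x` is a point of the type `A_{n-1}` ambient space lying in the open dominant chamber
and on no hyperplane of the `m`-Shi arrangement, hence an interior point of a dominant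
`m`-Shi region. -/
def RegionPoint (n m : ℕ) (x : ℕ → ℝ) : Prop :=
  SumZero n x ∧
  (∀ i j, i ≤ j → j + 2 ≤ n → 0 < inn x i j) ∧
  (∀ i j, i ≤ j → j + 2 ≤ n → ∀ t : ℤ, -(m : ℤ) < t → t ≤ m → inn x i j ≠ (t : ℝ))

/-- `e` is the Shi tableau of the dominant `m`-Shi region containing `x`:
`e_{ij} = min(⌊⟨x, α_{ij}⟩⌋, m)`, which is constant on the region and equals
`min(k_{ij}, m)` for the Shi coordinates `k` of the `m`-minimal alcove of the region. -/
def TabOf (n m : ℕ) (x : ℕ → ℝ) (e : ℕ → ℕ → ℤ) : Prop :=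
  ∀ i j, i ≤ j → j + 2 ≤ n → e i j = min ⌊inn x i j⌋ (m : ℤ)

/-- `e` is the Shi tableau of some dominant region of the `m`-Shi arrangement of type
`A_{n-1}`. -/
def IsShiTab (n m : ℕ) (e : ℕ → ℕ → ℤ) : Prop :=
  ∃ x, RegionPoint n m x ∧ TabOf n m x e

/-- `p` lies in the closure of the `m`-Shi region containing `x`. -/
def InClosure (n m : ℕ) (x p : ℕ → ℝ) : Prop :=
  SumZero n p ∧ ∀ i j, i ≤ j → j + 2 ≤ n → ∀ t : ℤ, -(m : ℤ) < t → t ≤ m →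
    (((t : ℝ) < inn x i j → (t : ℝ) ≤ inn p i j) ∧ (inn x i j < t → inn p i j ≤ t))

/-- The hyperplane `H_{α_{uv}, m}` is a separating wall for the dominant `m`-Shi region
containing `x`: the region lies on the far side of the hyperplane from the fundamental
alcove, and the closure of the region contains a point of the hyperplane lying on no other
hyperplane of the arrangement (so the hyperplane supports a facet). -/
def SepWall (n m : ℕ) (x : ℕ → ℝ) (u v : ℕ) : Prop :=
  (m : ℝ) < inn x u v ∧
  ∃ p, InClosure n m x p ∧ inn p u v = (m : ℝ) ∧
    ∀ i j, i ≤ j → j + 2 ≤ n → ∀ t : ℤ, -(m : ℤ) < t → t ≤ m →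
      ¬(i = u ∧ j = v ∧ t = (m : ℤ)) → inn p i j ≠ (t : ℝ)

/-- The combinatorial criterion for `H_{α_{uv}, m}` to be a separating wall. -/
def SepCrit (m : ℕ) (e : ℕ → ℕ → ℤ) (u v : ℕ) : Prop :=
  e u v = (m : ℤ) ∧ ∀ t, u ≤ t → t < v → e u t + e (t + 1) v = (m : ℤ) - 1

/-- The region with Shi tableau `e` has `H_{α_{uv}, m}` as a separating wall. -/
def SepWallTab (n m : ℕ) (e : ℕ → ℕ → ℤ) (u v : ℕ) : Prop :=
  ∃ x, RegionPoint n m x ∧ TabOf n m x e ∧ SepWall n m x u v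

/-- A tableau function normalized to be `0` outside the staircase index domain. -/
def Normalized (n : ℕ) (e : ℕ → ℕ → ℤ) : Prop :=
  ∀ i j, ¬(i ≤ j ∧ j + 2 ≤ n) → e i j = 0

section Aux

variable {k m : ℕ}

/-- integer indicator -/
def indZ (P : Prop) [Decidable P] : ℤ := if P then 1 else 0

/-- sorted values of the word `b` -/
def sv (b : Fin k → Fin m) (t : Fin k) : ℤ := (b (Tuple.sort b t) : ℤ)

lemma sv_nonneg (b : Fin k → Fin m) (t : Fin k) : 0 ≤ sv b t := by
  unfold sv; exact_mod_cast Nat.zero_le _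

lemma sv_le (b : Fin k → Fin m) (t : Fin k) : sv b t ≤ (m : ℤ) - 1 := by
  have := (b (Tuple.sort b t)).isLt
  unfold sv; omega

lemma sv_mono (b : Fin k → Fin m) : Monotone (sv b) := by
  intro i j hij
  have := Tuple.monotone_sort b hij
  simp only [Function.comp_apply] at this
  unfold sv; exact_mod_cast this

lemma sv_stab (b : Fin k → Fin m) {i j : Fin k} (hij : i < j) (h : sv b i = sv b j) :
    Tuple.sort b i < Tuple.sort b j := by
  refine (Tuple.eq_sort_iff.mp rfl).2 i j hij ?_
  have h' : ((b (Tuple.sort b i) : ℕ) : ℤ) = ((b (Tuple.sort b j) : ℕ) : ℤ) := h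
  exact Fin.ext (by exact_mod_cast h')

/-- the tableau associated to a word -/
def E (k m : ℕ) (b : Fin k → Fin m) (i j : ℕ) : ℤ :=
  if hij : i ≤ j ∧ j ≤ k then
    if hj : j < k then
      if hi : i = 0 then sv b ⟨j, hj⟩
      else sv b ⟨j, hj⟩ - sv b ⟨i - 1, by omega⟩
        - indZ (Tuple.sort b ⟨j, hj⟩ < Tuple.sort b ⟨i - 1, by omega⟩)
    else
      if hi : i = 0 then (m : ℤ) else (m : ℤ) - 1 - sv b ⟨i - 1, by omega⟩
  else 0

lemma E_bounds (b : Fin k → Fin m) {i j : ℕ} (hij : i ≤ j) (hjk : j ≤ k)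
    (hne : ¬(i = 0 ∧ j = k)) : 0 ≤ E k m b i j ∧ E k m b i j ≤ (m : ℤ) - 1 := by
  unfold E
  rw [dif_pos ⟨hij, hjk⟩]
  by_cases hj : j < k
  · rw [dif_pos hj]
    by_cases hi : i = 0
    · rw [dif_pos hi]
      exact ⟨sv_nonneg b _, sv_le b _⟩
    · rw [dif_neg hi]
      have h1 : (⟨i - 1, by omega⟩ : Fin k) < ⟨j, hj⟩ := by
        simp only [Fin.mk_lt_mk]; omega
      have hmono := sv_mono b h1.le
      rcases eq_or_lt_of_le hmono with heq | hlt
      · have := sv_stab b h1 heq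
        have : indZ (Tuple.sort b ⟨j, hj⟩ < Tuple.sort b ⟨i - 1, by omega⟩) = 0 := by
          unfold indZ
          rw [if_neg (by exact fun hc => absurd hc (not_lt.mpr this.le))]
        rw [this]
        have := sv_le b (⟨j, hj⟩ : Fin k)
        have := sv_nonneg b (⟨i - 1, by omega⟩ : Fin k)
        omega
      · have hind : (0:ℤ) ≤ indZ (Tuple.sort b ⟨j, hj⟩ < Tuple.sort b ⟨i - 1, by omega⟩) ∧
            indZ (Tuple.sort b ⟨j, hj⟩ < Tuple.sort b ⟨i - 1, by omega⟩) ≤ 1 := by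
          unfold indZ; split <;> omega
        have := sv_le b (⟨j, hj⟩ : Fin k)
        have := sv_nonneg b (⟨i - 1, by omega⟩ : Fin k)
        omega
  · rw [dif_neg hj]
    have hjk' : j = k := by omega
    have hi : ¬ i = 0 := fun hc => hne ⟨hc, hjk'⟩
    rw [dif_neg hi]
    have := sv_le b (⟨i - 1, by omega⟩ : Fin k)
    have := sv_nonneg b (⟨i - 1, by omega⟩ : Fin k)
    omega



noncomputable def aR (k m : ℕ) (b : Fin k → Fin m) (t : ℕ) : ℝ :=
  if h : t < k then (sv b ⟨t, h⟩ : ℝ) + (((Tuple.sort b ⟨t, h⟩ : ℕ) : ℝ) + 1) / ((k : ℝ) + 2)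
  else m

/-- the boundary point `p` -/
noncomputable def pR (k m : ℕ) (b : Fin k → Fin m) (i : ℕ) : ℝ :=
  (∑ t ∈ Finset.range (k + 1), aR k m b t) / ((k : ℝ) + 2) -
    (if i = 0 then 0 else aR k m b (i - 1))

/-- the interior region point `x` -/
noncomputable def xR (k m : ℕ) (b : Fin k → Fin m) (i : ℕ) : ℝ :=
  pR k m b i + (if i = 0 then 1 / (4 * ((k : ℝ) + 2)) else 0) -
    (if i = k + 1 then 1 / (4 * ((k : ℝ) + 2)) else 0)

lemma hK2 : (0:ℝ) < (k : ℝ) + 2 := by positivity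

lemma sum_pR (b : Fin k → Fin m) : SumZero (k + 2) (pR k m b) := by
  unfold SumZero pR
  rw [Finset.sum_sub_distrib, Finset.sum_const, Finset.card_range]
  have h1 : ∑ i ∈ Finset.range (k + 2), (if i = 0 then (0:ℝ) else aR k m b (i - 1)) =
      ∑ t ∈ Finset.range (k + 1), aR k m b t := by
    rw [Finset.sum_range_succ']
    simp
  rw [h1]
  have : ((k:ℝ) + 2) ≠ 0 := ne_of_gt hK2
  simp only [nsmul_eq_mul, Nat.cast_add, Nat.cast_ofNat]
  field_simp
  ring

lemma sum_xR (b : Fin k → Fin m) : SumZero (k + 2) (xR k m b) := by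
  unfold SumZero xR
  have h : ∀ i ∈ Finset.range (k+2),
      ((pR k m b i + if i = 0 then 1 / (4 * ((k:ℝ) + 2)) else 0) -
        if i = k + 1 then 1 / (4 * ((k:ℝ) + 2)) else 0) =
      pR k m b i + ((if i = 0 then 1 / (4 * ((k:ℝ) + 2)) else 0) -
        if i = k + 1 then 1 / (4 * ((k:ℝ) + 2)) else 0) := by
    intro i _; ring
  rw [Finset.sum_congr rfl h, Finset.sum_add_distrib, Finset.sum_sub_distrib]
  have h0 : ∑ i ∈ Finset.range (k+2), (if i = 0 then 1 / (4 * ((k:ℝ) + 2)) else 0) =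
      1 / (4 * ((k:ℝ) + 2)) := by
    rw [Finset.sum_ite_eq' (Finset.range (k+2)) 0 (fun _ => 1 / (4 * ((k:ℝ) + 2)))]
    rw [if_pos (Finset.mem_range.mpr (by omega))]
  have h1 : ∑ i ∈ Finset.range (k+2), (if i = k + 1 then 1 / (4 * ((k:ℝ) + 2)) else 0) =
      1 / (4 * ((k:ℝ) + 2)) := by
    rw [Finset.sum_ite_eq' (Finset.range (k+2)) (k+1) (fun _ => 1 / (4 * ((k:ℝ) + 2)))]
    rw [if_pos (Finset.mem_range.mpr (by omega))]
  rw [h0, h1, sum_pR b]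
  ring

lemma inn_pR (b : Fin k → Fin m) {i j : ℕ} (hi : i ≤ j) (hj : j ≤ k) :
    inn (pR k m b) i j = aR k m b j - (if i = 0 then 0 else aR k m b (i - 1)) := by
  unfold inn pR
  have h1 : j + 1 ≠ 0 := by omega
  rw [if_neg h1]
  have h2 : j + 1 - 1 = j := by omega
  rw [h2]
  ring

lemma inn_xR (b : Fin k → Fin m) {i j : ℕ} (hi : i ≤ j) (hj : j ≤ k) :
    inn (xR k m b) i j = inn (pR k m b) i j + (if i = 0 then 1 / (4 * ((k : ℝ) + 2)) else 0)
      + (if j = k then 1 / (4 * ((k : ℝ) + 2)) else 0) := by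
  unfold inn xR
  have h1 : j + 1 ≠ 0 := by omega
  have h2 : ¬ (i = k + 1) := by omega
  rw [if_neg h1, if_neg h2]
  have h3 : (if j + 1 = k + 1 then 1 / (4 * ((k : ℝ) + 2)) else 0) =
      (if j = k then 1 / (4 * ((k : ℝ) + 2)) else 0) := by
    congr 1
    simp only [eq_iff_iff, Nat.add_right_cancel_iff]
  rw [h3]
  ring


lemma inn_pR_theta (b : Fin k → Fin m) : inn (pR k m b) 0 k = (m : ℝ) := by
  rw [inn_pR b (Nat.zero_le k) le_rfl, if_pos rfl, sub_zero]
  unfold aR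
  rw [dif_neg (lt_irrefl k)]

lemma inn_pR_est (b : Fin k → Fin m) {i j : ℕ} (hij : i ≤ j) (hjk : j ≤ k)
    (hne : ¬(i = 0 ∧ j = k)) :
    (E k m b i j : ℝ) + 1 / ((k:ℝ) + 2) ≤ inn (pR k m b) i j ∧
    inn (pR k m b) i j ≤ (E k m b i j : ℝ) + ((k:ℝ) + 1) / ((k:ℝ) + 2) := by
  have hK : (0:ℝ) < (k : ℝ) + 2 := hK2
  have hdiv : ∀ a c : ℝ, a ≤ c → a / ((k:ℝ)+2) ≤ c / ((k:ℝ)+2) := by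
    intro a c h; gcongr
  have hKK : ((k:ℝ)+2) / ((k:ℝ)+2) = 1 := div_self (ne_of_gt hK)
  rw [inn_pR b hij hjk]
  unfold E
  rw [dif_pos ⟨hij, hjk⟩]
  by_cases hi : i = 0
  · have hj : j < k := by
      rcases Nat.lt_or_ge j k with h | h
      · exact h
      · exact absurd ⟨hi, by omega⟩ hne
    rw [dif_pos hj, dif_pos hi, if_pos hi]
    unfold aR
    rw [dif_pos hj]
    set u : ℕ := (Tuple.sort b ⟨j, hj⟩ : ℕ) with hu
    have hu1 : (0:ℝ) ≤ (u:ℝ) := Nat.cast_nonneg u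
    have hu2 : (u:ℝ) ≤ (k:ℝ) - 1 := by
      have := (Tuple.sort b ⟨j, hj⟩).isLt
      have : (u:ℝ) + 1 ≤ (k:ℝ) := by exact_mod_cast this
      linarith
    have f1 : (1:ℝ) / ((k:ℝ)+2) ≤ ((u:ℝ)+1) / ((k:ℝ)+2) := hdiv _ _ (by linarith)
    have f2 : ((u:ℝ)+1) / ((k:ℝ)+2) ≤ ((k:ℝ)+1) / ((k:ℝ)+2) := hdiv _ _ (by linarith)
    constructor <;> [linarith; linarith]
  · -- i ≥ 1
    rw [if_neg hi]
    have hi1 : 1 ≤ i := by omega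
    have hik : i - 1 < k := by omega
    by_cases hj : j < k
    · rw [dif_pos hj, dif_neg hi]
      unfold aR
      rw [dif_pos hj, dif_pos hik]
      set u : ℕ := (Tuple.sort b ⟨j, hj⟩ : ℕ) with hu
      set v : ℕ := (Tuple.sort b ⟨i - 1, hik⟩ : ℕ) with hv
      have huv : u ≠ v := by
        intro h
        have h2 : Tuple.sort b ⟨j, hj⟩ = Tuple.sort b ⟨i - 1, hik⟩ := Fin.ext h
        have h3 : (⟨j, hj⟩ : Fin k) = ⟨i - 1, hik⟩ := (Tuple.sort b).injective h2
        have := Fin.mk.injEq j hj (i-1) hik ▸ h3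
        simp only [Fin.mk.injEq] at h3
        omega
      have hu2 : (u:ℝ) ≤ (k:ℝ) - 1 := by
        have := (Tuple.sort b ⟨j, hj⟩).isLt
        have : (u:ℝ) + 1 ≤ (k:ℝ) := by exact_mod_cast this
        linarith
      have hv2 : (v:ℝ) ≤ (k:ℝ) - 1 := by
        have := (Tuple.sort b ⟨i - 1, hik⟩).isLt
        have : (v:ℝ) + 1 ≤ (k:ℝ) := by exact_mod_cast this
        linarith
      have hu1 : (0:ℝ) ≤ (u:ℝ) := Nat.cast_nonneg u
      have hv1 : (0:ℝ) ≤ (v:ℝ) := Nat.cast_nonneg v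
      have hA : ((u:ℝ)+1) / ((k:ℝ)+2) - ((v:ℝ)+1) / ((k:ℝ)+2) = ((u:ℝ)-(v:ℝ)) / ((k:ℝ)+2) := by
        rw [div_sub_div_same]
        norm_num
      by_cases hlt : Tuple.sort b ⟨j, hj⟩ < Tuple.sort b ⟨i - 1, hik⟩
      · have hZ : indZ (Tuple.sort b ⟨j, hj⟩ < Tuple.sort b ⟨i - 1, hik⟩) = 1 := if_pos hlt
        rw [hZ]
        have huv2 : (u:ℝ) + 1 ≤ (v:ℝ) := by
          have : u < v := hlt
          exact_mod_cast this
        have f1 : ((u:ℝ)-(v:ℝ)) / ((k:ℝ)+2) ≤ (-1 : ℝ) / ((k:ℝ)+2) := hdiv _ _ (by linarith)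
        have f2 : (-((k:ℝ)+1)) / ((k:ℝ)+2) ≤ ((u:ℝ)-(v:ℝ)) / ((k:ℝ)+2) := hdiv _ _ (by linarith)
        have g1 : (-1 : ℝ) / ((k:ℝ)+2) = -(1 / ((k:ℝ)+2)) := by rw [neg_div]
        have g2 : (-((k:ℝ)+1)) / ((k:ℝ)+2) = -(((k:ℝ)+1) / ((k:ℝ)+2)) := by rw [neg_div]
        have g3 : ((k:ℝ)+1) / ((k:ℝ)+2) + 1 / ((k:ℝ)+2) = 1 := by
          rw [← add_div]
          rw [show (k:ℝ)+1+1 = (k:ℝ)+2 by ring]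
          exact hKK
        push_cast
        constructor <;> linarith
      · have hZ : indZ (Tuple.sort b ⟨j, hj⟩ < Tuple.sort b ⟨i - 1, hik⟩) = 0 := if_neg hlt
        rw [hZ]
        have hvu : v < u := by
          rcases lt_or_ge (v:ℕ) u with h | h
          · exact h
          · have : u < v ∨ u = v := by omega
            rcases this with h' | h'
            · exact absurd (by exact_mod_cast h' : Tuple.sort b ⟨j, hj⟩ < Tuple.sort b ⟨i-1, hik⟩) hlt
            · exact absurd h' huv
        have huv2 : (v:ℝ) + 1 ≤ (u:ℝ) := by exact_mod_cast hvu
        have f1 : (1 : ℝ) / ((k:ℝ)+2) ≤ ((u:ℝ)-(v:ℝ)) / ((k:ℝ)+2) := hdiv _ _ (by linarith)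
        have f2 : ((u:ℝ)-(v:ℝ)) / ((k:ℝ)+2) ≤ ((k:ℝ)+1) / ((k:ℝ)+2) := hdiv _ _ (by linarith)
        push_cast
        constructor <;> linarith
    · -- j = k
      rw [dif_neg hj, dif_neg hi]
      unfold aR
      rw [dif_neg hj, dif_pos hik]
      set v : ℕ := (Tuple.sort b ⟨i - 1, hik⟩ : ℕ) with hv
      have hv2 : (v:ℝ) ≤ (k:ℝ) - 1 := by
        have := (Tuple.sort b ⟨i - 1, hik⟩).isLt
        have : (v:ℝ) + 1 ≤ (k:ℝ) := by exact_mod_cast this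
        linarith
      have hv1 : (0:ℝ) ≤ (v:ℝ) := Nat.cast_nonneg v
      have f1 : (1:ℝ) / ((k:ℝ)+2) ≤ ((v:ℝ)+1) / ((k:ℝ)+2) := hdiv _ _ (by linarith)
      have f2 : ((v:ℝ)+1) / ((k:ℝ)+2) ≤ ((k:ℝ)+1) / ((k:ℝ)+2) := hdiv _ _ (by linarith)
      have g3 : ((k:ℝ)+1) / ((k:ℝ)+2) + 1 / ((k:ℝ)+2) = 1 := by
        rw [← add_div]
        rw [show (k:ℝ)+1+1 = (k:ℝ)+2 by ring]
        exact div_self (ne_of_gt hK)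
      push_cast
      constructor <;> linarith
lemma E_theta (b : Fin k → Fin m) : E k m b 0 k = (m : ℤ) := by
  unfold E
  rw [dif_pos ⟨Nat.zero_le k, le_rfl⟩, dif_neg (lt_irrefl k), dif_pos rfl]

lemma E_norm (b : Fin k → Fin m) : ∀ i j, ¬(i ≤ j ∧ j + 2 ≤ k + 2) → E k m b i j = 0 := by
  intro i j h
  unfold E
  rw [dif_neg (by omega)]

lemma realize (hm : 1 ≤ m) (b : Fin k → Fin m) :
    RegionPoint (k + 2) m (xR k m b) ∧ TabOf (k + 2) m (xR k m b) (E k m b) ∧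
      SepWall (k + 2) m (xR k m b) 0 k := by
  have hK : (0:ℝ) < (k : ℝ) + 2 := hK2
  have hKpos : (0:ℝ) < 1 / ((k:ℝ) + 2) := by positivity
  have heps : (0:ℝ) < 1 / (4 * ((k:ℝ) + 2)) := by positivity
  have hg3 : ((k:ℝ)+1) / ((k:ℝ)+2) + 1 / ((k:ℝ)+2) = 1 := by
    rw [← add_div, show (k:ℝ)+1+1 = (k:ℝ)+2 by ring]
    exact div_self (ne_of_gt hK)
  have heps2 : 2 * (1 / (4 * ((k:ℝ) + 2))) < 1 / ((k:ℝ)+2) := by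
    have h4 : (0:ℝ) < 4 * ((k:ℝ)+2) := by positivity
    rw [mul_one_div, div_lt_div_iff₀ h4 hK]
    nlinarith
  have hK1 : 1 / ((k:ℝ)+2) ≤ 1 := by
    rw [div_le_one hK]; linarith
  -- perturbation size
  have hpert : ∀ i j : ℕ, i ≤ j → j ≤ k →
      (0:ℝ) ≤ (if i = 0 then 1 / (4 * ((k:ℝ) + 2)) else 0)
        + (if j = k then 1 / (4 * ((k:ℝ) + 2)) else 0) ∧
      (if i = 0 then 1 / (4 * ((k:ℝ) + 2)) else 0)
        + (if j = k then 1 / (4 * ((k:ℝ) + 2)) else 0) ≤ 2 * (1 / (4 * ((k:ℝ) + 2))) := by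
    intro i j _ _
    constructor <;> (split_ifs <;> linarith)
  -- key bracketing for non-θ pairs
  have key : ∀ i j : ℕ, i ≤ j → j ≤ k → ¬(i = 0 ∧ j = k) →
      (E k m b i j : ℝ) < inn (xR k m b) i j ∧ inn (xR k m b) i j < (E k m b i j : ℝ) + 1 := by
    intro i j hij hjk hne
    have hest := inn_pR_est b hij hjk hne
    have hx := inn_xR b hij hjk
    have hp := hpert i j hij hjk
    constructor
    · rw [hx]; linarith [hest.1]
    · rw [hx]; linarith [hest.2]
  -- θ value
  have hxth : inn (xR k m b) 0 k = (m:ℝ) + 2 * (1 / (4 * ((k:ℝ) + 2))) := by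
    rw [inn_xR b (Nat.zero_le k) le_rfl, inn_pR_theta b, if_pos rfl, if_pos rfl]
    ring
  have hfloor : ∀ i j : ℕ, i ≤ j → j ≤ k → ¬(i = 0 ∧ j = k) →
      ⌊inn (xR k m b) i j⌋ = E k m b i j := by
    intro i j hij hjk hne
    have h := key i j hij hjk hne
    rw [Int.floor_eq_iff]
    exact ⟨(h.1).le, by push_cast; linarith [h.2]⟩
  refine ⟨⟨sum_xR b, ?_, ?_⟩, ?_, ?_, ?_⟩
  · -- positivity
    intro i j hij hj2
    have hjk : j ≤ k := by omega
    by_cases hθ : i = 0 ∧ j = k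
    · rw [hθ.1, hθ.2, hxth]
      have : (1:ℝ) ≤ (m:ℝ) := by exact_mod_cast hm
      linarith
    · have h := key i j hij hjk hθ
      have hE := E_bounds b hij hjk hθ
      have : (0:ℝ) ≤ (E k m b i j : ℝ) := by exact_mod_cast hE.1
      unfold inn at h ⊢
      linarith [h.1]
  · -- avoidance
    intro i j hij hj2 t ht1 ht2
    have hjk : j ≤ k := by omega
    by_cases hθ : i = 0 ∧ j = k
    · rw [hθ.1, hθ.2, hxth]
      intro hc
      have : (t:ℝ) ≤ (m:ℝ) := by exact_mod_cast ht2
      linarith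
    · have h := key i j hij hjk hθ
      intro hc
      rw [hc] at h
      have h1 : E k m b i j < t := by exact_mod_cast h.1
      have h2 : (t:ℝ) < (E k m b i j : ℝ) + 1 := h.2
      have h2' : t < E k m b i j + 1 := by exact_mod_cast h2
      omega
  · -- TabOf
    intro i j hij hj2
    have hjk : j ≤ k := by omega
    by_cases hθ : i = 0 ∧ j = k
    · rw [hθ.1, hθ.2, E_theta b, hxth]
      have hfl : ⌊(m:ℝ) + 2 * (1 / (4 * ((k:ℝ) + 2)))⌋ = (m:ℤ) := by
        rw [Int.floor_eq_iff]
        constructor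
        · push_cast; linarith
        · push_cast; linarith
      rw [hfl, min_self]
    · rw [hfloor i j hij hjk hθ]
      have hE := E_bounds b hij hjk hθ
      rw [min_eq_left (by omega)]
  · -- m < inn x θ
    rw [hxth]; linarith
  · -- the boundary point
    refine ⟨pR k m b, ⟨sum_pR b, ?_⟩, inn_pR_theta b, ?_⟩
    · intro i j hij hj2 t ht1 ht2
      have hjk : j ≤ k := by omega
      by_cases hθ : i = 0 ∧ j = k
      · rw [hθ.1, hθ.2, inn_pR_theta b, hxth]
        constructor
        · intro _; exact_mod_cast ht2
        · intro hc
          have : (t:ℝ) ≤ (m:ℝ) := by exact_mod_cast ht2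
          linarith
      · have hest := inn_pR_est b hij hjk hθ
        have hx := inn_xR b hij hjk
        have hp := hpert i j hij hjk
        have h := key i j hij hjk hθ
        constructor
        · intro hlt
          have h2' : t < E k m b i j + 1 := by
            have : (t:ℝ) < (E k m b i j : ℝ) + 1 := lt_trans hlt h.2
            exact_mod_cast this
          have : t ≤ E k m b i j := by omega
          have : (t:ℝ) ≤ (E k m b i j : ℝ) := by exact_mod_cast this
          linarith [hest.1]
        · intro hlt
          rw [hx] at hlt
          linarith [hp.1]
    · -- genericity of p
      intro i j hij hj2 t ht1 ht2 hnot
      have hjk : j ≤ k := by omega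
      by_cases hθ : i = 0 ∧ j = k
      · rw [hθ.1, hθ.2, inn_pR_theta b]
        intro hc
        have : t = (m:ℤ) := by exact_mod_cast hc.symm
        exact hnot ⟨hθ.1, hθ.2, this⟩
      · have hest := inn_pR_est b hij hjk hθ
        intro hc
        rw [hc] at hest
        have h1 : E k m b i j < t := by
          have : (E k m b i j : ℝ) < (t:ℝ) := by linarith [hest.1]
          exact_mod_cast this
        have h2 : t < E k m b i j + 1 := by
          have g3 : ((k:ℝ)+1) / ((k:ℝ)+2) < 1 := by linarith
          have : (t:ℝ) < (E k m b i j : ℝ) + 1 := by linarith [hest.2]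
          exact_mod_cast this
        omega

lemma surj (hm : 1 ≤ m) (e : ℕ → ℕ → ℤ)
    (he : ∀ i j, ¬(i ≤ j ∧ j + 2 ≤ k + 2) → e i j = 0)
    (x : ℕ → ℝ) (hx : RegionPoint (k + 2) m x) (ht : TabOf (k + 2) m x e)
    (hw : SepWall (k + 2) m x 0 k) : ∃ b : Fin k → Fin m, E k m b = e := by
  obtain ⟨hθ, p, ⟨hpsum, hord⟩, hpθ, hgen⟩ := hw
  have hm' : (1:ℤ) ≤ (m:ℤ) := by exact_mod_cast hm
  -- Step A : each non-θ entry lies strictly below the corresponding inner product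
  have hA : ∀ i j, i ≤ j → j ≤ k → ¬(i = 0 ∧ j = k) →
      0 ≤ e i j ∧ e i j ≤ (m:ℤ) ∧ (e i j : ℝ) < inn p i j := by
    intro i j hij hjk hne
    have hj2 : j + 2 ≤ k + 2 := by omega
    have hx0 := hx.2.1 i j hij hj2
    have hte := ht i j hij hj2
    have hfl0 : 0 ≤ ⌊inn x i j⌋ := Int.floor_nonneg.mpr hx0.le
    have h0 : 0 ≤ e i j := by rw [hte]; exact le_min hfl0 (by omega)
    have h1 : e i j ≤ (m:ℤ) := by rw [hte]; exact min_le_right _ _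
    have ht1 : -(m:ℤ) < e i j := by omega
    have htlt : (e i j : ℝ) < inn x i j := by
      rcases le_or_gt ⌊inn x i j⌋ (m:ℤ) with hc | hc
      · have hh : e i j = ⌊inn x i j⌋ := by rw [hte]; exact min_eq_left hc
        rw [hh]
        have h2 := Int.floor_le (inn x i j)
        have h3 := hx.2.2 i j hij hj2 ⌊inn x i j⌋ (by omega) hc
        exact lt_of_le_of_ne h2 (fun hq => h3 hq.symm)
      · have hh : e i j = (m:ℤ) := by rw [hte]; exact min_eq_right hc.le
        rw [hh]
        have h2 : ((m:ℤ):ℝ) + 1 ≤ inn x i j := by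
          have : (m:ℤ) + 1 ≤ ⌊inn x i j⌋ := by omega
          have := Int.le_floor.mp this
          push_cast at this ⊢
          linarith
        linarith
    have hle := (hord i j hij hj2 (e i j) ht1 h1).1 htlt
    have hne' := hgen i j hij hj2 (e i j) ht1 h1 (fun hc => hne ⟨hc.1, hc.2.1⟩)
    exact ⟨h0, h1, lt_of_le_of_ne hle (fun hq => hne' hq.symm)⟩
  -- Step B : complementary sums
  have hB : ∀ t, t < k → inn p 0 t + inn p (t + 1) k = (m:ℝ) := by
    intro t htk
    have hh : inn p 0 t + inn p (t + 1) k = inn p 0 k := by unfold inn; ring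
    rw [hh, hpθ]
  -- Step C : upper bound
  have hC : ∀ i j, i ≤ j → j ≤ k → ¬(i = 0 ∧ j = k) → inn p i j < (m:ℝ) := by
    have hC0 : ∀ j, j < k → inn p 0 j < (m:ℝ) := by
      intro j hjk
      have h1 := hA (j + 1) k (by omega) le_rfl (by omega)
      have h2 := hB j hjk
      have : (0:ℝ) ≤ (e (j+1) k : ℝ) := by exact_mod_cast h1.1
      linarith [h1.2.2]
    intro i j hij hjk hne
    by_cases hi : i = 0
    · subst hi
      exact hC0 j (by omega)
    · have hsplit : inn p i j = inn p 0 j - inn p 0 (i - 1) := by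
        unfold inn
        rw [show i - 1 + 1 = i from by omega]
        ring
      have hpos : (0:ℝ) < inn p 0 (i - 1) := by
        have h1 := hA 0 (i - 1) (Nat.zero_le _) (by omega) (by omega)
        have : (0:ℝ) ≤ (e 0 (i-1) : ℝ) := by exact_mod_cast h1.1
        linarith [h1.2.2]
      by_cases hj : j < k
      · have := hC0 j hj
        rw [hsplit]; linarith
      · have hjk' : j = k := by omega
        subst hjk'
        have h2 := hB (i - 1) (by omega)
        rw [show i - 1 + 1 = i from by omega] at h2
        linarith [hpos]
  -- Step D : entries are floors, strictly bracketing
  have hD : ∀ i j, i ≤ j → j ≤ k → ¬(i = 0 ∧ j = k) →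
      e i j = ⌊inn p i j⌋ ∧ 0 ≤ e i j ∧ e i j ≤ (m:ℤ) - 1 ∧
      (e i j : ℝ) < inn p i j ∧ inn p i j < (e i j : ℝ) + 1 := by
    intro i j hij hjk hne
    have hj2 : j + 2 ≤ k + 2 := by omega
    obtain ⟨h0, h1, hlt⟩ := hA i j hij hjk hne
    have hup := hC i j hij hjk hne
    have hte := ht i j hij hj2
    set s : ℤ := ⌊inn p i j⌋ with hs
    have hs0 : 0 ≤ s := Int.floor_nonneg.mpr (by
      have : (0:ℝ) ≤ (e i j : ℝ) := by exact_mod_cast h0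
      linarith)
    have hsm : s ≤ (m:ℤ) - 1 := by
      have : s < (m:ℤ) := Int.floor_lt.mpr (by exact_mod_cast hup)
      omega
    have hsne : inn p i j ≠ (s:ℝ) := hgen i j hij hj2 s (by omega) (by omega)
      (fun hc => hne ⟨hc.1, hc.2.1⟩)
    have hslt : (s:ℝ) < inn p i j := lt_of_le_of_ne (Int.floor_le _) (fun hq => hsne hq.symm)
    have hsup : inn p i j < (s:ℝ) + 1 := by
      have := Int.lt_floor_add_one (inn p i j)
      push_cast at this ⊢
      linarith
    -- e ≤ s
    have hes : e i j ≤ s := by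
      have hple : inn p i j < ((s+1 : ℤ):ℝ) := by push_cast; linarith
      have hxle : inn x i j ≤ ((s+1:ℤ):ℝ) := by
        by_contra hcon
        push_neg at hcon
        have := (hord i j hij hj2 (s+1) (by omega) (by omega)).1 hcon
        linarith
      have hxne := hx.2.2 i j hij hj2 (s+1) (by omega) (by omega)
      have hxlt : inn x i j < ((s+1:ℤ):ℝ) := lt_of_le_of_ne hxle hxne
      have : ⌊inn x i j⌋ < s + 1 := Int.floor_lt.mpr hxlt
      rw [hte]
      have := min_le_left ⌊inn x i j⌋ (m:ℤ)
      omega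
    -- s ≤ e
    have hse : s ≤ e i j := by
      have hxge : ¬ (inn x i j < (s:ℝ)) := by
        intro hcon
        have := (hord i j hij hj2 s (by omega) (by omega)).2 hcon
        linarith
      push_neg at hxge
      have : s ≤ ⌊inn x i j⌋ := Int.le_floor.mpr hxge
      rw [hte]
      exact le_min this (by omega)
    have hes' : e i j = s := le_antisymm hes hse
    exact ⟨hes', h0, by omega, by rw [hes']; exact hslt, by rw [hes']; exact hsup⟩
  -- θ entry
  have hek : e 0 k = (m:ℤ) := by
    have hte := ht 0 k (Nat.zero_le k) le_rfl
    have : (m:ℤ) ≤ ⌊inn x 0 k⌋ := Int.le_floor.mpr (by exact_mod_cast hθ.le)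
    rw [hte, min_eq_right this]
  -- the real coordinates of p
  set a : Fin k → ℝ := fun t => inn p 0 (t : ℕ) with ha
  have ha_diff : ∀ i j : Fin k, i < j → a j - a i = inn p ((i:ℕ) + 1) (j:ℕ) := by
    intro i j _
    simp only [ha]
    unfold inn
    ring
  have ha_mono : StrictMono a := by
    intro i j hij
    have hij' : (i:ℕ) + 1 ≤ (j:ℕ) := hij
    have hd := hD ((i:ℕ)+1) (j:ℕ) hij' (le_of_lt j.isLt) (by omega)
    have h0 : (0:ℝ) ≤ (e ((i:ℕ)+1) (j:ℕ) : ℝ) := by exact_mod_cast hd.2.1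
    have := ha_diff i j hij
    linarith [hd.2.2.2.1]
  have ha_floor : ∀ t : Fin k, ⌊a t⌋ = e 0 (t:ℕ) := by
    intro t
    exact (hD 0 (t:ℕ) (Nat.zero_le _) (le_of_lt t.isLt) (by omega)).1.symm
  set g : Fin k → ℝ := fun t => Int.fract (a t) with hg
  have hg_lt : ∀ i j : Fin k, i < j → g i ≠ g j := by
    intro i j hij hc
    obtain ⟨z, hz⟩ := Int.fract_eq_fract.mp hc
    have hd := hD ((i:ℕ)+1) (j:ℕ) hij (le_of_lt j.isLt) (by omega)
    have hdiff := ha_diff i j hij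
    have hz' : inn p ((i:ℕ)+1) (j:ℕ) = ((-z : ℤ):ℝ) := by
      push_cast
      linarith [hz]
    rw [hz'] at hd
    have h1 : (e ((i:ℕ)+1) (j:ℕ) : ℝ) < ((-z:ℤ):ℝ) := hd.2.2.2.1
    have h2 : ((-z:ℤ):ℝ) < (e ((i:ℕ)+1) (j:ℕ) : ℝ) + 1 := hd.2.2.2.2
    have h1' : e ((i:ℕ)+1) (j:ℕ) < -z := by exact_mod_cast h1
    have h2' : -z < e ((i:ℕ)+1) (j:ℕ) + 1 := by exact_mod_cast h2
    omega
  have hg_inj : Function.Injective g := by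
    intro i j hc
    rcases lt_trichotomy i j with h | h | h
    · exact absurd hc (hg_lt i j h)
    · exact h
    · exact absurd hc.symm (hg_lt j i h)
  set ρ : Equiv.Perm (Fin k) := Tuple.sort g with hρ
  have hgρ : StrictMono (g ∘ ρ) :=
    (Tuple.monotone_sort g).strictMono_of_injective (hg_inj.comp ρ.injective)
  -- the word
  have hbval : ∀ s : Fin k, (e 0 ((ρ s : Fin k) : ℕ)).toNat < m := by
    intro s
    have hd := hD 0 ((ρ s : Fin k) : ℕ) (Nat.zero_le _) (le_of_lt (ρ s).isLt) (by
      have := (ρ s).isLt; omega)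
    omega
  set b : Fin k → Fin m := fun s => ⟨(e 0 ((ρ s : Fin k) : ℕ)).toNat, hbval s⟩ with hb
  have he0_nonneg : ∀ t : Fin k, 0 ≤ e 0 (t:ℕ) := by
    intro t
    exact (hD 0 (t:ℕ) (Nat.zero_le _) (le_of_lt t.isLt) (by have := t.isLt; omega)).2.1
  -- sort b is ρ⁻¹
  have hfloor_mono : ∀ i j : Fin k, i ≤ j → e 0 (i:ℕ) ≤ e 0 (j:ℕ) := by
    intro i j hij
    rw [← ha_floor i, ← ha_floor j]
    exact Int.floor_le_floor (ha_mono.monotone hij)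
  have hsb : ρ⁻¹ = Tuple.sort b := by
    rw [Tuple.eq_sort_iff]
    constructor
    · intro i j hij
      simp only [hb, Function.comp_apply, Equiv.Perm.coe_inv, ρ.apply_symm_apply]
      rw [Fin.mk_le_mk]
      exact Int.toNat_le_toNat (hfloor_mono _ _ hij)
    · intro i j hij hbe
      simp only [hb, Equiv.Perm.coe_inv, ρ.apply_symm_apply, Fin.mk.injEq] at hbe
      have hee : e 0 (i:ℕ) = e 0 (j:ℕ) := by
        have h1 := he0_nonneg i
        have h2 := he0_nonneg j
        omega
      have hfe : ⌊a i⌋ = ⌊a j⌋ := by rw [ha_floor i, ha_floor j]; exact hee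
      have halt : a i < a j := ha_mono hij
      have hglt : g i < g j := by
        simp only [hg, Int.fract]
        rw [hfe]
        linarith
      have := hgρ.lt_iff_lt (a := ρ⁻¹ i) (b := ρ⁻¹ j)
      simp only [Function.comp_apply, Equiv.Perm.coe_inv, ρ.apply_symm_apply] at this
      exact this.mp hglt
  have hsv : ∀ t : Fin k, sv b t = e 0 (t : ℕ) := by
    intro t
    unfold sv
    rw [← hsb]
    simp only [hb, Equiv.Perm.coe_inv, ρ.apply_symm_apply]
    exact Int.toNat_of_nonneg (he0_nonneg t)
  have hind : ∀ i j : Fin k, (Tuple.sort b i < Tuple.sort b j) ↔ g i < g j := by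
    intro i j
    rw [← hsb]
    have := hgρ.lt_iff_lt (a := ρ⁻¹ i) (b := ρ⁻¹ j)
    simp only [Function.comp_apply, Equiv.Perm.coe_inv, ρ.apply_symm_apply] at this
    exact ⟨fun h => this.mpr h, fun h => this.mp h⟩
  refine ⟨b, ?_⟩
  funext i j
  by_cases hdom : i ≤ j ∧ j ≤ k
  · obtain ⟨hij, hjk⟩ := hdom
    unfold E
    rw [dif_pos ⟨hij, hjk⟩]
    by_cases hj : j < k
    · rw [dif_pos hj]
      by_cases hi : i = 0
      · rw [dif_pos hi, hi]
        exact hsv ⟨j, hj⟩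
      · rw [dif_neg hi]
        have hik : i - 1 < k := by omega
        have hd := hD i j hij hjk (fun hc => hi hc.1)
        have hlt : (⟨i - 1, hik⟩ : Fin k) < (⟨j, hj⟩ : Fin k) := by
          rw [Fin.mk_lt_mk]; omega
        have hdiff := ha_diff ⟨i - 1, hik⟩ ⟨j, hj⟩ hlt
        simp only at hdiff
        rw [show i - 1 + 1 = i from by omega] at hdiff
        have hc1 : ⌊a ⟨j, hj⟩⌋ = e 0 j := ha_floor ⟨j, hj⟩
        have hc2 : ⌊a ⟨i - 1, hik⟩⌋ = e 0 (i - 1) := ha_floor ⟨i - 1, hik⟩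
        have hf1 : (↑⌊a ⟨j, hj⟩⌋ : ℝ) + Int.fract (a ⟨j, hj⟩) = a ⟨j, hj⟩ :=
          Int.floor_add_fract _
        have hf2 : (↑⌊a ⟨i - 1, hik⟩⌋ : ℝ) + Int.fract (a ⟨i - 1, hik⟩) = a ⟨i - 1, hik⟩ :=
          Int.floor_add_fract _
        have hg1a : (0:ℝ) ≤ Int.fract (a ⟨j, hj⟩) := Int.fract_nonneg _
        have hg1b : Int.fract (a ⟨j, hj⟩) < 1 := Int.fract_lt_one _
        have hg2a : (0:ℝ) ≤ Int.fract (a ⟨i - 1, hik⟩) := Int.fract_nonneg _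
        have hg2b : Int.fract (a ⟨i - 1, hik⟩) < 1 := Int.fract_lt_one _
        have hgne : g ⟨i - 1, hik⟩ ≠ g ⟨j, hj⟩ := hg_lt _ _ hlt
        rw [hsv ⟨j, hj⟩, hsv ⟨i - 1, hik⟩]
        simp only
        rw [hd.1]
        by_cases hgg : g ⟨j, hj⟩ < g ⟨i - 1, hik⟩
        · rw [show indZ (Tuple.sort b ⟨j, hj⟩ < Tuple.sort b ⟨i - 1, hik⟩) = 1 from
            if_pos ((hind _ _).mpr hgg)]
          have hgg' : Int.fract (a ⟨j, hj⟩) < Int.fract (a ⟨i - 1, hik⟩) := hgg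
          have : ⌊inn p i j⌋ = e 0 j - e 0 (i - 1) - 1 := by
            rw [← hdiff, Int.floor_eq_iff, ← hc1, ← hc2]
            push_cast
            constructor <;> linarith
          omega
        · rw [show indZ (Tuple.sort b ⟨j, hj⟩ < Tuple.sort b ⟨i - 1, hik⟩) = 0 from
            if_neg (fun hc => hgg ((hind _ _).mp hc))]
          have hgg' : Int.fract (a ⟨i - 1, hik⟩) < Int.fract (a ⟨j, hj⟩) := by
            have : g ⟨i - 1, hik⟩ ≠ g ⟨j, hj⟩ := hgne
            have h1 : ¬ (g ⟨j, hj⟩ < g ⟨i - 1, hik⟩) := hgg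
            have h2 : g ⟨i - 1, hik⟩ ≤ g ⟨j, hj⟩ := le_of_not_gt h1
            exact lt_of_le_of_ne h2 this
          have : ⌊inn p i j⌋ = e 0 j - e 0 (i - 1) := by
            rw [← hdiff, Int.floor_eq_iff, ← hc1, ← hc2]
            push_cast
            constructor <;> linarith
          omega
    · -- j = k
      rw [dif_neg hj]
      have hjk' : j = k := by omega
      by_cases hi : i = 0
      · rw [dif_pos hi, hi, hjk']
        exact hek.symm
      · rw [dif_neg hi]
        subst hjk'
        have hik : i - 1 < j := by omega
        have hd := hD i j hij le_rfl (fun hc => hi hc.1)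
        have hBB := hB (i - 1) hik
        rw [show i - 1 + 1 = i from by omega] at hBB
        have hd2 := hD 0 (i - 1) (Nat.zero_le _) (by omega) (by omega)
        rw [hsv ⟨i - 1, hik⟩]
        simp only
        rw [hd.1]
        have haval : inn p 0 (i - 1) = a ⟨i - 1, hik⟩ := rfl
        have : ⌊inn p i j⌋ = (m:ℤ) - 1 - e 0 (i - 1) := by
          rw [Int.floor_eq_iff]
          push_cast
          constructor <;> linarith [hd2.2.2.2.1, hd2.2.2.2.2, hBB]
        omega
  · rw [he i j (by omega)]
    unfold E
    rw [dif_neg (by omega)]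

lemma E_at0 (b : Fin k → Fin m) (t : Fin k) : E k m b 0 (t : ℕ) = sv b t := by
  unfold E
  rw [dif_pos ⟨Nat.zero_le _, le_of_lt t.isLt⟩, dif_pos t.isLt, dif_pos rfl]

lemma E_mid (b : Fin k → Fin m) (i j : Fin k) (hij : i < j) :
    E k m b ((i : ℕ) + 1) (j : ℕ) =
      sv b j - sv b i - indZ (Tuple.sort b j < Tuple.sort b i) := by
  have hij' : (i:ℕ) + 1 ≤ (j:ℕ) := hij
  unfold E
  rw [dif_pos ⟨hij', le_of_lt j.isLt⟩, dif_pos j.isLt, dif_neg (Nat.succ_ne_zero _)]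
  have h1 : (⟨(j:ℕ), j.isLt⟩ : Fin k) = j := Fin.eta j j.isLt
  have h2 : (⟨(i:ℕ) + 1 - 1, by omega⟩ : Fin k) = i := by
    apply Fin.ext
    simp
  rw [h1, h2]

lemma E_inj (b b' : Fin k → Fin m) (h : E k m b = E k m b') : b = b' := by
  have hsv_eq : ∀ t : Fin k, sv b t = sv b' t := by
    intro t
    have := congrFun (congrFun h 0) (t : ℕ)
    rwa [E_at0 b t, E_at0 b' t] at this
  have hord : ∀ i j : Fin k, i < j →
      (Tuple.sort b j < Tuple.sort b i ↔ Tuple.sort b' j < Tuple.sort b' i) := by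
    intro i j hij
    have hmid := congrFun (congrFun h ((i : ℕ) + 1)) (j : ℕ)
    rw [E_mid b i j hij, E_mid b' i j hij, hsv_eq i, hsv_eq j] at hmid
    unfold indZ at hmid
    by_cases h1 : Tuple.sort b j < Tuple.sort b i <;>
      by_cases h2 : Tuple.sort b' j < Tuple.sort b' i
    · exact iff_of_true h1 h2
    · exfalso; rw [if_pos h1, if_neg h2] at hmid; omega
    · exfalso; rw [if_neg h1, if_pos h2] at hmid; omega
    · exact iff_of_false h1 h2
  set σ : Equiv.Perm (Fin k) := Tuple.sort b with hσ
  set σ' : Equiv.Perm (Fin k) := Tuple.sort b' with hσ'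
  have hmono : StrictMono (fun u => σ' (σ⁻¹ u)) := by
    intro u v huv
    set i : Fin k := σ⁻¹ u with hi
    set j : Fin k := σ⁻¹ v with hj
    have hσi : σ i = u := σ.apply_symm_apply u
    have hσj : σ j = v := σ.apply_symm_apply v
    have hijne : i ≠ j := by
      intro hc
      have : u = v := by rw [← hσi, ← hσj, hc]
      exact absurd this (ne_of_lt huv)
    rcases lt_trichotomy i j with hc | hc | hc
    · have := hord i j hc
      have h1 : ¬ (σ j < σ i) := by rw [hσi, hσj]; exact not_lt.mpr huv.le
      have h2 : ¬ (σ' j < σ' i) := fun hq => h1 (this.mpr hq)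
      have h3 : σ' i ≠ σ' j := fun hq => hijne (σ'.injective hq)
      exact lt_of_le_of_ne (not_lt.mp h2) h3
    · exact absurd hc hijne
    · have := hord j i hc
      have h1 : σ i < σ j := by rw [hσi, hσj]; exact huv
      exact this.mp h1
  have hrange : Set.range (fun u => σ' (σ⁻¹ u)) = Set.range (id : Fin k → Fin k) := by
    rw [Set.range_id]
    exact Set.range_eq_univ.mpr (fun y => ⟨σ (σ'⁻¹ y), by simp⟩)
  have hid : (fun u => σ' (σ⁻¹ u)) = id := by
    haveI inst : WellFoundedLT (Fin k) := inferInstance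
    exact (@StrictMono.range_inj (Fin k) (Fin k) _ _ inst _ id hmono strictMono_id).mp hrange
  have hperm : σ' = σ := by
    ext t
    have h2 : σ' t = σ t := by simpa using congrFun hid (σ t)
    rw [h2]
  funext s
  have h1 := hsv_eq (σ⁻¹ s)
  unfold sv at h1
  rw [← hσ, ← hσ', hperm, Equiv.Perm.coe_inv, σ.apply_symm_apply] at h1
  exact Fin.ext (by exact_mod_cast h1)

end Aux

/-- there are exactly `m^(n-2)` dominant regions of the `m`-Shi arrangement
of type `A_{n-1}` having `H_{θ,m}` as a separating wall (regions are identified with their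
normalized Shi tableaux). -/
theorem count_theta_sepwall (n m : ℕ) (hn : 2 ≤ n) (hm : 1 ≤ m) :
    Nat.card {e : ℕ → ℕ → ℤ // Normalized n e ∧
      ∃ x, RegionPoint n m x ∧ TabOf n m x e ∧ SepWall n m x 0 (n - 2)} =
    m ^ (n - 2) := by
  obtain ⟨k, rfl⟩ : ∃ k, n = k + 2 := ⟨n - 2, by omega⟩
  simp only [Nat.add_sub_cancel]
  have hbij : Function.Bijective (fun b : Fin k → Fin m =>
      (⟨E k m b, E_norm b,
        ⟨xR k m b, (realize hm b).1, (realize hm b).2.1, (realize hm b).2.2⟩⟩ :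
        {e : ℕ → ℕ → ℤ // Normalized (k + 2) e ∧
          ∃ x, RegionPoint (k + 2) m x ∧ TabOf (k + 2) m x e ∧
            SepWall (k + 2) m x 0 k})) := by
    constructor
    · intro b b' hbb
      exact E_inj b b' (congrArg Subtype.val hbb)
    · rintro ⟨e, hnorm, x, hrp, htab, hsw⟩
      obtain ⟨b, hb⟩ := surj hm e hnorm x hrp htab hsw
      exact ⟨b, Subtype.ext hb⟩
  rw [← Nat.card_eq_of_bijective _ hbij]
  simp [Nat.card_eq_fintype_card]

end Shi
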